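/- Let g_1,…,g_n ∈ ℝ^d, H_i = g_i g_iᵀ, H = (1/n)∑_{i=1}^n H_i, η > 0, and let M = (I − ηH)² + η²( (1/n)∑_{i=1}^n H_i² − H² ), a symmetric matrix, with λ = λ_max(M) its largest eigenvalue. Consider the random iteration θ_{k+1} = θ_k − η H_{i_k}(θ_k − θ*), where (i_k)_{k≥0} are i.i.d. uniform on {1,…,n} and θ_0, θ* ∈ ℝ^d are fixed. Then for every k ≥ 0, E[‖θ_k − θ*‖₂²] ≤ λ^k ‖θ_0 − θ*‖₂². In particular, if λ ≤ 1, then E[‖θ_k − θ*‖₂²] ≤ ‖θ_0 − θ*‖₂² for all k, i.e. the iteration is stochastically stable around θ*. -/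

import Mathlib

open Matrix

/-- Reinterpret a plain vector `Fin d → ℝ` as an element of `EuclideanSpace ℝ (Fin d)`,
so that `‖·‖` denotes the Euclidean (ℓ²) norm. -/
noncomputable def toEucl {d : ℕ} (x : Fin d → ℝ) : EuclideanSpace ℝ (Fin d) :=
  (WithLp.equiv 2 (Fin d → ℝ)).symm x

/-- The random iteration driven by a sequence of sampled indices: `iterIdx step k s x`
applies `step (s 0)`, then `step (s 1)`, ..., then `step (s (k-1))` to `x`. -/
def iterIdx {n : ℕ} {E : Type*} (step : Fin n → E → E) :
    ∀ k : ℕ, (Fin k → Fin n) → E → E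
  | 0, _, x => x
  | k + 1, s, x => iterIdx step k (fun j => s j.succ) (step (s 0) x)

section helpers

variable {d : ℕ}

lemma dot_sum' {n : ℕ} (v : Fin d → ℝ) (w : Fin n → Fin d → ℝ) :
    v ⬝ᵥ (∑ i, w i) = ∑ i, v ⬝ᵥ w i :=
  map_sum (AddMonoidHom.mk' (fun u => v ⬝ᵥ u) (fun a b => dotProduct_add v a b)) w Finset.univ

lemma sum_mulVec' {n : ℕ} (f : Fin n → Matrix (Fin d) (Fin d) ℝ) (v : Fin d → ℝ) :
    (∑ i, f i) *ᵥ v = ∑ i, f i *ᵥ v :=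
  map_sum (AddMonoidHom.mk' (fun A : Matrix (Fin d) (Fin d) ℝ => A *ᵥ v)
    (fun A B => Matrix.add_mulVec A B v)) f Finset.univ

lemma inner_toEucl (x : EuclideanSpace ℝ (Fin d)) (v : Fin d → ℝ) :
    (inner ℝ x (toEucl v) : ℝ) = (fun i => x i) ⬝ᵥ v := by
  simp [toEucl, PiLp.inner_apply, dotProduct, WithLp.equiv_symm_apply, mul_comm]

lemma norm_sq_eq_dot (x : EuclideanSpace ℝ (Fin d)) :
    ‖x‖ ^ 2 = (fun i => x i) ⬝ᵥ (fun i => x i) := by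
  rw [EuclideanSpace.real_norm_sq_eq]
  simp [dotProduct, sq]

/-- Rayleigh bound: for a Hermitian real matrix, the quadratic form is bounded by
`lam * ‖x‖²` whenever `lam` dominates all eigenvalues. -/
lemma rayleigh_bound (M : Matrix (Fin d) (Fin d) ℝ) (hM : M.IsHermitian)
    (lam : ℝ) (hub : ∀ i, hM.eigenvalues i ≤ lam) (x : EuclideanSpace ℝ (Fin d)) :
    (fun i => x i) ⬝ᵥ (M *ᵥ fun i => x i) ≤ lam * ‖x‖ ^ 2 := by
  set b := hM.eigenvectorBasis with hb
  have key : (fun i => x i) ⬝ᵥ (M *ᵥ fun i => x i)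
      = ∑ i, hM.eigenvalues i * (inner ℝ x (b i) : ℝ) ^ 2 := by
    have h1 : (inner ℝ x (toEucl (M *ᵥ fun i => x i)) : ℝ)
        = (fun i => x i) ⬝ᵥ (M *ᵥ fun i => x i) := inner_toEucl _ _
    rw [← h1, ← b.sum_inner_mul_inner x (toEucl (M *ᵥ fun i => x i))]
    refine Finset.sum_congr rfl fun i _ => ?_
    have h2 : (inner ℝ (b i) (toEucl (M *ᵥ fun j => x j)) : ℝ)
        = (fun j => (b i : EuclideanSpace ℝ (Fin d)) j) ⬝ᵥ (M *ᵥ fun j => x j) :=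
      inner_toEucl _ _
    have h3 : (fun j => (b i : EuclideanSpace ℝ (Fin d)) j) ⬝ᵥ (M *ᵥ fun j => x j)
        = (M *ᵥ fun j => (b i : EuclideanSpace ℝ (Fin d)) j) ⬝ᵥ (fun j => x j) := by
      have hMsym : Mᵀ = M := by
        ext a c
        have := congrFun (congrFun hM.eq a) c
        simpa using this
      rw [dotProduct_mulVec, ← Matrix.mulVec_transpose, hMsym]
    have h4 : (M *ᵥ fun j => (b i : EuclideanSpace ℝ (Fin d)) j)
        = hM.eigenvalues i • fun j => (b i : EuclideanSpace ℝ (Fin d)) j :=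
      hM.mulVec_eigenvectorBasis i
    rw [h2, h3, h4, smul_dotProduct]
    have h5 : (fun j => (b i : EuclideanSpace ℝ (Fin d)) j) ⬝ᵥ (fun j => x j)
        = (inner ℝ (b i) x : ℝ) := by
      simp [PiLp.inner_apply, dotProduct, mul_comm]
    rw [h5]
    have h6 : (inner ℝ x (b i) : ℝ) = (inner ℝ (b i) x : ℝ) := real_inner_comm _ _
    rw [h6, smul_eq_mul]; ring
  rw [key]
  have hsum : ∑ i, ((inner ℝ x (b i) : ℝ)) ^ 2 = ‖x‖ ^ 2 := by
    have := b.sum_inner_mul_inner x x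
    rw [real_inner_self_eq_norm_sq] at this
    rw [← this]
    refine Finset.sum_congr rfl fun i _ => ?_
    rw [real_inner_comm x (b i), sq]
  calc ∑ i, hM.eigenvalues i * (inner ℝ x (b i) : ℝ) ^ 2
      ≤ ∑ i, lam * (inner ℝ x (b i) : ℝ) ^ 2 :=
        Finset.sum_le_sum fun i _ => mul_le_mul_of_nonneg_right (hub i) (sq_nonneg _)
    _ = lam * ‖x‖ ^ 2 := by rw [← Finset.mul_sum, hsum]

end helpers

/-- linearized SGD stability. For the iteration
`θ_{k+1} = θ_k − η H_{i_k}(θ_k − θ*)` with `i_k` i.i.d. uniform on `{1,…,n}`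
(the expectation over the indices being the uniform average over all index
sequences `s : Fin k → Fin n`), with `H i = g i g iᵀ`,
`M = (I − ηH)² + η²((1/n)∑ H i² − H²)` symmetric and `λ = λ_max(M)`, we have
`E[‖θ_k − θ*‖²] ≤ λ^k ‖θ_0 − θ*‖²`; in particular if `λ ≤ 1` the iteration is
stochastically stable around `θ*`. -/
theorem sgd_linearized_stability {d n : ℕ} (hd : 0 < d) (hn : 0 < n)
    (g : Fin n → EuclideanSpace ℝ (Fin d))
    (H : Fin n → Matrix (Fin d) (Fin d) ℝ)
    (hH : ∀ i, H i = vecMulVec (g i) (g i))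
    (Hbar : Matrix (Fin d) (Fin d) ℝ) (hHbar : Hbar = (1 / (n : ℝ)) • ∑ i, H i)
    (η : ℝ) (hη : 0 < η)
    (M : Matrix (Fin d) (Fin d) ℝ)
    (hMdef : M = (1 - η • Hbar) ^ 2 +
      η ^ 2 • ((1 / (n : ℝ)) • ∑ i, (H i) ^ 2 - Hbar ^ 2))
    (hM : M.IsHermitian)
    (lam : ℝ) (hlam : IsGreatest (Set.range hM.eigenvalues) lam)
    (θ0 θs : EuclideanSpace ℝ (Fin d)) :
    (∀ k : ℕ,
      (1 / (n : ℝ) ^ k) * ∑ s : Fin k → Fin n,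
          ‖iterIdx (fun i (x : EuclideanSpace ℝ (Fin d)) => x - η • toEucl (H i *ᵥ (x - θs))) k s θ0 - θs‖ ^ 2 ≤
        lam ^ k * ‖θ0 - θs‖ ^ 2) ∧
    (lam ≤ 1 → ∀ k : ℕ,
      (1 / (n : ℝ) ^ k) * ∑ s : Fin k → Fin n,
          ‖iterIdx (fun i (x : EuclideanSpace ℝ (Fin d)) => x - η • toEucl (H i *ᵥ (x - θs))) k s θ0 - θs‖ ^ 2 ≤
        ‖θ0 - θs‖ ^ 2) := by
  have hn' : (n : ℝ) ≠ 0 := Nat.cast_ne_zero.mpr hn.ne'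
  -- symmetry of each H i
  have hHsymm : ∀ i, (H i)ᵀ = H i := by
    intro i
    rw [hH i]
    ext a b
    simp [Matrix.vecMulVec_apply, Matrix.transpose_apply, mul_comm]
  -- simplified expression for M
  have hM2 : M = (1 : Matrix (Fin d) (Fin d) ℝ) - (2 * η) • Hbar
      + (η ^ 2 * (1 / (n : ℝ))) • ∑ i, (H i) ^ 2 := by
    have hA : ∀ A : Matrix (Fin d) (Fin d) ℝ, (1 - A) ^ 2 = 1 - A - A + A * A := by
      intro A; rw [sq, mul_sub, mul_one, sub_mul, one_mul]; abel
    rw [hMdef, hA, smul_mul_smul_comm, sq Hbar]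
    module
  -- error step
  set estep : Fin n → EuclideanSpace ℝ (Fin d) → EuclideanSpace ℝ (Fin d) :=
    fun i e => e - η • toEucl (H i *ᵥ fun j => e j) with hestep
  -- one-step identity
  have one_step : ∀ e : EuclideanSpace ℝ (Fin d),
      ∑ i, ‖estep i e‖ ^ 2 = (n : ℝ) * ((fun j => e j) ⬝ᵥ (M *ᵥ fun j => e j)) := by
    intro e
    set v : Fin d → ℝ := fun j => e j with hv
    have hterm : ∀ i, ‖estep i e‖ ^ 2
        = v ⬝ᵥ v - 2 * η * (v ⬝ᵥ (H i *ᵥ v)) + η ^ 2 * (v ⬝ᵥ ((H i ^ 2) *ᵥ v)) := by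
      intro i
      have h0 : ‖estep i e‖ ^ 2
          = ‖e‖ ^ 2 - 2 * (inner ℝ e (η • toEucl (H i *ᵥ v)) : ℝ)
            + ‖η • toEucl (H i *ᵥ v)‖ ^ 2 := norm_sub_sq_real _ _
      have h1 : (inner ℝ e (η • toEucl (H i *ᵥ v)) : ℝ) = η * (v ⬝ᵥ (H i *ᵥ v)) := by
        rw [real_inner_smul_right, inner_toEucl]
      have h2 : ‖η • toEucl (H i *ᵥ v)‖ ^ 2 = η ^ 2 * ((H i *ᵥ v) ⬝ᵥ (H i *ᵥ v)) := by
        rw [norm_smul, mul_pow, Real.norm_eq_abs, sq_abs]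
        congr 1
        rw [norm_sq_eq_dot]
        congr 1 <;> ext j <;> simp [toEucl, WithLp.equiv_symm_apply]
      have h3 : (H i *ᵥ v) ⬝ᵥ (H i *ᵥ v) = v ⬝ᵥ ((H i ^ 2) *ᵥ v) := by
        rw [sq, ← Matrix.mulVec_mulVec, dotProduct_mulVec v, ← Matrix.mulVec_transpose,
          hHsymm i, dotProduct_comm]
      rw [h0, h1, h2, h3, norm_sq_eq_dot e]
      ring
    rw [Finset.sum_congr rfl (fun i _ => hterm i)]
    have hMv : M *ᵥ v = v - (2 * η) • (Hbar *ᵥ v)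
        + (η ^ 2 * (1 / (n : ℝ))) • ((∑ i, (H i) ^ 2) *ᵥ v) := by
      rw [hM2, Matrix.add_mulVec, Matrix.sub_mulVec, Matrix.one_mulVec,
        Matrix.smul_mulVec, Matrix.smul_mulVec]
    have hHbarv : Hbar *ᵥ v = (1 / (n : ℝ)) • ((∑ i, H i) *ᵥ v) := by
      rw [hHbar, Matrix.smul_mulVec]
    rw [Finset.sum_add_distrib, Finset.sum_sub_distrib, hMv]
    rw [dotProduct_add, dotProduct_sub, dotProduct_smul, dotProduct_smul,
      hHbarv, dotProduct_smul, sum_mulVec' H v, sum_mulVec' (fun i => (H i)^2) v,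
      dot_sum' v (fun i => H i *ᵥ v), dot_sum' v (fun i => (H i)^2 *ᵥ v)]
    rw [Finset.sum_const, Finset.card_univ, Fintype.card_fin]
    simp only [smul_eq_mul, ← Finset.mul_sum, nsmul_eq_mul]
    field_simp
  -- spectral bound on the one-step average
  have hub : ∀ i, hM.eigenvalues i ≤ lam := fun i => hlam.2 ⟨i, rfl⟩
  have one_step_le : ∀ e : EuclideanSpace ℝ (Fin d),
      (1 / (n : ℝ)) * ∑ i, ‖estep i e‖ ^ 2 ≤ lam * ‖e‖ ^ 2 := by
    intro e
    rw [one_step e]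
    have : (1 / (n : ℝ)) * ((n : ℝ) * ((fun j => e j) ⬝ᵥ (M *ᵥ fun j => e j)))
        = (fun j => e j) ⬝ᵥ (M *ᵥ fun j => e j) := by field_simp
    rw [this]
    exact rayleigh_bound M hM lam hub e
  -- λ ≥ 0
  have hlam0 : 0 ≤ lam := by
    set e : EuclideanSpace ℝ (Fin d) := EuclideanSpace.single ⟨0, hd⟩ (1 : ℝ) with he
    have h1 : (0 : ℝ) ≤ (1 / (n : ℝ)) * ∑ i, ‖estep i e‖ ^ 2 := by
      apply mul_nonneg (by positivity)
      exact Finset.sum_nonneg fun i _ => sq_nonneg _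
    have h2 := one_step_le e
    have h3 : ‖e‖ = 1 := by rw [he, EuclideanSpace.norm_single]; simp
    rw [h3] at h2
    simpa using h1.trans h2
  -- iteration on errors
  set step : Fin n → EuclideanSpace ℝ (Fin d) → EuclideanSpace ℝ (Fin d) :=
    fun i x => x - η • toEucl (H i *ᵥ (x - θs)) with hstep
  have iter_err : ∀ k : ℕ, ∀ s : Fin k → Fin n, ∀ x : EuclideanSpace ℝ (Fin d),
      iterIdx step k s x - θs = iterIdx estep k s (x - θs) := by
    intro k
    induction k with
    | zero => intro s x; rfl
    | succ k ih =>
      intro s x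
      show iterIdx step k _ (step (s 0) x) - θs = iterIdx estep k _ (estep (s 0) (x - θs))
      rw [ih]
      congr 1
      show step (s 0) x - θs = estep (s 0) (x - θs)
      simp only [hstep, hestep, WithLp.ofLp_sub]
      abel
  -- main induction on errors
  have main : ∀ k : ℕ, ∀ e0 : EuclideanSpace ℝ (Fin d),
      (1 / (n : ℝ) ^ k) * ∑ s : Fin k → Fin n, ‖iterIdx estep k s e0‖ ^ 2
        ≤ lam ^ k * ‖e0‖ ^ 2 := by
    intro k
    induction k with
    | zero =>
      intro e0
      simp [iterIdx]
    | succ k ih =>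
      intro e0
      have hsplit : ∑ s : Fin (k+1) → Fin n, ‖iterIdx estep (k+1) s e0‖ ^ 2
          = ∑ i : Fin n, ∑ s : Fin k → Fin n, ‖iterIdx estep k s (estep i e0)‖ ^ 2 := by
        have h : ∑ s : Fin (k+1) → Fin n, ‖iterIdx estep (k+1) s e0‖ ^ 2
            = ∑ p : Fin n × (Fin k → Fin n), ‖iterIdx estep k p.2 (estep p.1 e0)‖ ^ 2 :=
          Fintype.sum_equiv (Fin.consEquiv fun _ => Fin n).symm _ _ (fun s => rfl)
        rw [h, Fintype.sum_prod_type]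
      rw [hsplit]
      have hfac : (1 / (n : ℝ) ^ (k+1)) = (1 / (n : ℝ)) * (1 / (n : ℝ) ^ k) := by
        rw [pow_succ]; field_simp
      rw [hfac, mul_assoc, Finset.mul_sum]
      have hle1 : ∑ i : Fin n, (1 / (n : ℝ) ^ k) *
            ∑ s : Fin k → Fin n, ‖iterIdx estep k s (estep i e0)‖ ^ 2
          ≤ ∑ i : Fin n, lam ^ k * ‖estep i e0‖ ^ 2 :=
        Finset.sum_le_sum fun i _ => ih (estep i e0)
      calc (1 / (n : ℝ)) * ∑ i : Fin n, (1 / (n : ℝ) ^ k) *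
            ∑ s : Fin k → Fin n, ‖iterIdx estep k s (estep i e0)‖ ^ 2
          ≤ (1 / (n : ℝ)) * ∑ i : Fin n, lam ^ k * ‖estep i e0‖ ^ 2 := by
            apply mul_le_mul_of_nonneg_left hle1 (by positivity)
        _ = lam ^ k * ((1 / (n : ℝ)) * ∑ i : Fin n, ‖estep i e0‖ ^ 2) := by
            rw [← Finset.mul_sum]; ring
        _ ≤ lam ^ k * (lam * ‖e0‖ ^ 2) := by
            apply mul_le_mul_of_nonneg_left (one_step_le e0) (pow_nonneg hlam0 k)
        _ = lam ^ (k+1) * ‖e0‖ ^ 2 := by rw [pow_succ]; ring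
  have part1 : ∀ k : ℕ,
      (1 / (n : ℝ) ^ k) * ∑ s : Fin k → Fin n,
          ‖iterIdx step k s θ0 - θs‖ ^ 2 ≤ lam ^ k * ‖θ0 - θs‖ ^ 2 := by
    intro k
    have : ∑ s : Fin k → Fin n, ‖iterIdx step k s θ0 - θs‖ ^ 2
        = ∑ s : Fin k → Fin n, ‖iterIdx estep k s (θ0 - θs)‖ ^ 2 :=
      Finset.sum_congr rfl fun s _ => by rw [iter_err k s θ0]
    rw [this]
    exact main k (θ0 - θs)
  refine ⟨part1, fun hle k => ?_⟩
  refine (part1 k).trans ?_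
  have : lam ^ k ≤ 1 := pow_le_one₀ hlam0 hle
  nlinarith [sq_nonneg ‖θ0 - θs‖]
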